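/- Every symmetric polynomial evaluated at the Jucys–Murphy elements 𝒥₂,…,𝒥ₙ lies in the center of the group algebra ℚ[Sₙ]. -/

import Mathlib

open Finset

/-- The Jucys–Murphy element `𝒥_k` in `ℚ[S_{n+1}]`. -/
noncomputable def JM (n : ℕ) (k : Fin (n + 1)) : MonoidAlgebra ℚ (Equiv.Perm (Fin (n + 1))) :=
  ∑ i ∈ Finset.univ.filter (fun i : Fin (n + 1) => i < k),
    MonoidAlgebra.of ℚ (Equiv.Perm (Fin (n + 1))) (Equiv.swap i k)

section aux
variable {n : ℕ}

local notation "of'" => MonoidAlgebra.of ℚ (Equiv.Perm (Fin (n+1)))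

-- group identity: σ * swap j k = swap (σ j) (σ k) * σ
lemma swap_mul_swap_eq (σ : Equiv.Perm (Fin (n+1))) (j k : Fin (n+1)) :
    σ * Equiv.swap j k = Equiv.swap (σ j) (σ k) * σ := by
  rw [Equiv.swap_apply_apply, inv_mul_cancel_right]

lemma JM_comm_swap (a b k : Fin (n+1)) (hab : (b:ℕ) = (a:ℕ) + 1)
    (hka : k ≠ a) (hkb : k ≠ b) :
    of' (Equiv.swap a b) * JM n k = JM n k * of' (Equiv.swap a b) := by
  unfold JM
  rw [Finset.mul_sum, Finset.sum_mul]
  simp only [← map_mul]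
  refine Finset.sum_bij' (fun j _ => Equiv.swap a b j) (fun j _ => Equiv.swap a b j)
    ?_ ?_ ?_ ?_ ?_
  · intro j hj
    simp only [Finset.mem_filter, Finset.mem_univ, true_and] at hj ⊢
    rcases eq_or_ne j a with rfl | hja
    · rw [Equiv.swap_apply_left]
      have h0 := Fin.lt_def.mp hj
      have h2 : (k:ℕ) ≠ (b:ℕ) := fun h => hkb (Fin.ext h)
      exact Fin.lt_def.mpr (by omega)
    rcases eq_or_ne j b with rfl | hjb
    · rw [Equiv.swap_apply_right]
      have h0 := Fin.lt_def.mp hj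
      exact Fin.lt_def.mpr (by omega)
    · rwa [Equiv.swap_apply_of_ne_of_ne hja hjb]
  · intro j hj
    simp only [Finset.mem_filter, Finset.mem_univ, true_and] at hj ⊢
    rcases eq_or_ne j a with rfl | hja
    · rw [Equiv.swap_apply_left]
      have h0 := Fin.lt_def.mp hj
      have h2 : (k:ℕ) ≠ (b:ℕ) := fun h => hkb (Fin.ext h)
      exact Fin.lt_def.mpr (by omega)
    rcases eq_or_ne j b with rfl | hjb
    · rw [Equiv.swap_apply_right]
      have h0 := Fin.lt_def.mp hj
      exact Fin.lt_def.mpr (by omega)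
    · rwa [Equiv.swap_apply_of_ne_of_ne hja hjb]
  · intro j _; exact Equiv.swap_apply_self _ _ _
  · intro j _; exact Equiv.swap_apply_self _ _ _
  · intro j hj
    congr 1
    have hk : Equiv.swap a b k = k :=
      Equiv.swap_apply_of_ne_of_ne hka hkb
    calc Equiv.swap a b * Equiv.swap j k
        = Equiv.swap (Equiv.swap a b j) (Equiv.swap a b k) * Equiv.swap a b :=
          swap_mul_swap_eq _ j k
      _ = Equiv.swap (Equiv.swap a b j) k * Equiv.swap a b := by rw [hk]


lemma filter_lt_succ (a b : Fin (n+1)) (hab : (b:ℕ) = (a:ℕ)+1) :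
    Finset.univ.filter (fun j : Fin (n+1) => j < b)
      = insert a (Finset.univ.filter (fun j : Fin (n+1) => j < a)) := by
  ext j
  simp only [Finset.mem_insert, Finset.mem_filter, Finset.mem_univ, true_and,
    Fin.lt_def, Fin.ext_iff]
  omega

lemma JM_mul_swap (a b : Fin (n+1)) (hab : (b:ℕ) = (a:ℕ)+1) :
    JM n b * of' (Equiv.swap a b) = 1 + of' (Equiv.swap a b) * JM n a := by
  unfold JM
  rw [filter_lt_succ a b hab, Finset.sum_insert (by simp only [Finset.mem_filter, Finset.mem_univ, true_and]; exact lt_irrefl a),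
    add_mul, Finset.sum_mul, Finset.mul_sum]
  simp only [← map_mul, Equiv.swap_mul_self, map_one]
  congr 1
  refine Finset.sum_congr rfl fun j hj => ?_
  simp only [Finset.mem_filter, Finset.mem_univ, true_and, Fin.lt_def] at hj
  have hja : j ≠ a := fun h => absurd (congrArg Fin.val h) (by omega)
  have hjb : j ≠ b := fun h => absurd (congrArg Fin.val h) (by omega)
  congr 1
  calc Equiv.swap j b * Equiv.swap a b
      = Equiv.swap (Equiv.swap a b j) (Equiv.swap a b a) * Equiv.swap a b := by
        rw [Equiv.swap_apply_of_ne_of_ne hja hjb, Equiv.swap_apply_left]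
    _ = Equiv.swap a b * Equiv.swap j a := (swap_mul_swap_eq _ j a).symm

lemma swap_mul_JM (a b : Fin (n+1)) (hab : (b:ℕ) = (a:ℕ)+1) :
    of' (Equiv.swap a b) * JM n b = 1 + JM n a * of' (Equiv.swap a b) := by
  unfold JM
  rw [filter_lt_succ a b hab, Finset.sum_insert (by simp only [Finset.mem_filter, Finset.mem_univ, true_and]; exact lt_irrefl a),
    mul_add, Finset.sum_mul, Finset.mul_sum]
  simp only [← map_mul, Equiv.swap_mul_self, map_one]
  congr 1
  refine Finset.sum_congr rfl fun j hj => ?_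
  simp only [Finset.mem_filter, Finset.mem_univ, true_and, Fin.lt_def] at hj
  have hja : j ≠ a := fun h => absurd (congrArg Fin.val h) (by omega)
  have hjb : j ≠ b := fun h => absurd (congrArg Fin.val h) (by omega)
  congr 1
  calc Equiv.swap a b * Equiv.swap j b
      = Equiv.swap (Equiv.swap a b j) (Equiv.swap a b b) * Equiv.swap a b :=
        swap_mul_swap_eq _ j b
    _ = Equiv.swap j a * Equiv.swap a b := by
        rw [Equiv.swap_apply_of_ne_of_ne hja hjb, Equiv.swap_apply_right]

lemma swap_comm_JM_sum (a b : Fin (n+1)) (hab : (b:ℕ) = (a:ℕ)+1) :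
    Commute (of' (Equiv.swap a b)) (JM n a + JM n b) := by
  have h1 := JM_mul_swap a b hab
  have h2 := swap_mul_JM a b hab
  show _ = _
  rw [mul_add, add_mul, h1, h2]
  abel

lemma swap_comm_JM_prod (a b : Fin (n+1)) (hab : (b:ℕ) = (a:ℕ)+1)
    (hc : Commute (JM n a) (JM n b)) :
    Commute (of' (Equiv.swap a b)) (JM n a * JM n b) := by
  have h1 := JM_mul_swap a b hab
  have h2 := swap_mul_JM a b hab
  have h1' : of' (Equiv.swap a b) * JM n a = JM n b * of' (Equiv.swap a b) - 1 := by
    rw [h1]; abel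
  show _ = _
  calc of' (Equiv.swap a b) * (JM n a * JM n b)
      = (of' (Equiv.swap a b) * JM n a) * JM n b := by rw [mul_assoc]
    _ = (JM n b * of' (Equiv.swap a b) - 1) * JM n b := by rw [h1']
    _ = JM n b * (of' (Equiv.swap a b) * JM n b) - JM n b := by
        rw [sub_mul, one_mul, mul_assoc]
    _ = JM n b * (1 + JM n a * of' (Equiv.swap a b)) - JM n b := by rw [h2]
    _ = (JM n b * JM n a) * of' (Equiv.swap a b) := by
        rw [mul_add, mul_one, mul_assoc]; abel
    _ = (JM n a * JM n b) * of' (Equiv.swap a b) := by rw [hc.eq]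

end aux


lemma sum_pow_mem {A : Type*} [CommRing A] [Algebra ℚ A] (C : Subalgebra ℚ A)
    {x y : A} (hs : x + y ∈ C) (hp : x * y ∈ C) (p q : ℕ) :
    x ^ p * y ^ q + x ^ q * y ^ p ∈ C := by
  have key : ∀ m : ℕ, x ^ m + y ^ m ∈ C ∧ x ^ (m+1) + y ^ (m+1) ∈ C := by
    intro m
    induction m with
    | zero =>
      refine ⟨?_, ?_⟩
      · rw [pow_zero, pow_zero]; exact C.add_mem C.one_mem C.one_mem
      · rw [pow_one, pow_one]; exact hs
    | succ m ih =>
      refine ⟨ih.2, ?_⟩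
      have hxy : x^(m+1+1) + y^(m+1+1)
          = (x+y) * (x^(m+1) + y^(m+1)) - (x*y) * (x^m + y^m) := by ring
      rw [hxy]
      exact C.sub_mem (C.mul_mem hs ih.2) (C.mul_mem hp ih.1)
  rcases le_total q p with hqp | hpq
  · obtain ⟨d, rfl⟩ := Nat.exists_eq_add_of_le hqp
    have h : x ^ (q+d) * y ^ q + x ^ q * y ^ (q+d) = (x*y)^q * (x^d + y^d) := by ring
    rw [h]
    exact C.mul_mem (C.pow_mem hp q) (key d).1
  · obtain ⟨d, rfl⟩ := Nat.exists_eq_add_of_le hpq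
    have h : x ^ p * y ^ (p+d) + x ^ (p+d) * y ^ p = (x*y)^p * (x^d + y^d) := by ring
    rw [h]
    exact C.mul_mem (C.pow_mem hp p) (key d).1

lemma ring_aux {A : Type*} [CommRing A] [Algebra ℚ A] (x y W : A) (p q : ℕ) (c : ℚ) :
    algebraMap ℚ A c * (x ^ p * (y ^ q * W)) + algebraMap ℚ A c * (y ^ p * (x ^ q * W))
      = algebraMap ℚ A c * (W * (x ^ p * y ^ q + x ^ q * y ^ p)) := by
  ring


set_option maxHeartbeats 1000000 in
/-- Every symmetric polynomial `P` in `n` variables, evaluated at the Jucys–Murphy elements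
`𝒥₂,…,𝒥_{n+1}` of `ℚ[S_{n+1}]`, lies in the center of the group algebra. -/
theorem symmPoly_JM_mem_center (n : ℕ)
    (hcomm : ∀ j k : Fin (n + 1), Commute (JM n j) (JM n k))
    (P : MvPolynomial (Fin n) ℚ) (hP : P.IsSymmetric) :
    (∑ m ∈ P.support, P.coeff m •
        (Finset.univ : Finset (Fin n)).noncommProd (fun k : Fin n => JM n k.succ ^ m k)
          (fun a _ c _ _ => (hcomm a.succ c.succ).pow_pow _ _)) ∈
      Subalgebra.center ℚ (MonoidAlgebra ℚ (Equiv.Perm (Fin (n + 1)))) := by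
  classical
  have hcr : ∀ a ∈ Set.range (fun k : Fin n => JM n k.succ),
      ∀ b ∈ Set.range (fun k : Fin n => JM n k.succ), a * b = b * a := by
    rintro _ ⟨j, rfl⟩ _ ⟨k, rfl⟩; exact (hcomm j.succ k.succ).eq
  letI : CommRing (Algebra.adjoin ℚ (Set.range (fun k : Fin n => JM n k.succ))) :=
    Algebra.adjoinCommRingOfComm ℚ hcr
  let g : Fin n → Algebra.adjoin ℚ (Set.range (fun k : Fin n => JM n k.succ)) :=
    fun k => ⟨JM n k.succ, Algebra.subset_adjoin ⟨k, rfl⟩⟩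
  -- Step 1: the given sum is the evaluation of `P` at `g`, coerced back.
  have hprod : ∀ d : Fin n →₀ ℕ,
      ((∏ i, g i ^ d i :
          Algebra.adjoin ℚ (Set.range (fun k : Fin n => JM n k.succ)))
            : MonoidAlgebra ℚ (Equiv.Perm (Fin (n+1))))
        = (Finset.univ : Finset (Fin n)).noncommProd (fun k : Fin n => JM n k.succ ^ d k)
          (fun a _ c _ _ => (hcomm a.succ c.succ).pow_pow _ _) := by
    intro d
    rw [← Finset.noncommProd_eq_prod]
    have h2 := Finset.map_noncommProd (s := (Finset.univ : Finset (Fin n)))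
      (f := fun i => g i ^ d i)
      (fun a _ c _ _ => Subtype.ext ((hcomm a.succ c.succ).pow_pow (d a) (d c)).eq)
      ((Algebra.adjoin ℚ (Set.range (fun k : Fin n => JM n k.succ))).val.toMonoidHom)
    refine Eq.trans ?_ (h2.trans ?_)
    · rfl
    · exact Finset.noncommProd_congr rfl (fun x _ => rfl) _
  have hz : (∑ m ∈ P.support, P.coeff m •
        (Finset.univ : Finset (Fin n)).noncommProd (fun k : Fin n => JM n k.succ ^ m k)
          (fun a _ c _ _ => (hcomm a.succ c.succ).pow_pow _ _))
      = ((MvPolynomial.aeval g P :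
          Algebra.adjoin ℚ (Set.range (fun k : Fin n => JM n k.succ)))
            : MonoidAlgebra ℚ (Equiv.Perm (Fin (n+1)))) := by
    rw [MvPolynomial.aeval_def, MvPolynomial.eval₂_eq']
    show _ = (Algebra.adjoin ℚ (Set.range (fun k : Fin n => JM n k.succ))).val _
    rw [map_sum]
    refine Finset.sum_congr rfl fun d _ => ?_
    rw [map_mul, AlgHom.commutes, ← Algebra.smul_def, ← hprod d]
    rfl
  -- Step 2: the evaluation commutes with every adjacent transposition.
  have hgen : ∀ i : Fin n,
      Commute (MonoidAlgebra.of ℚ (Equiv.Perm (Fin (n+1)))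
          (Equiv.swap i.castSucc i.succ))
        ((MvPolynomial.aeval g P :
          Algebra.adjoin ℚ (Set.range (fun k : Fin n => JM n k.succ)))
            : MonoidAlgebra ℚ (Equiv.Perm (Fin (n+1)))) := by
    intro i
    haveI : NeZero n := ⟨by have := i.isLt; omega⟩
    have hb : ((i.succ : Fin (n+1)) : ℕ) = ((i.castSucc : Fin (n+1)) : ℕ) + 1 := by simp
    set C : Subalgebra ℚ
        (Algebra.adjoin ℚ (Set.range (fun k : Fin n => JM n k.succ))) :=
      (Subalgebra.centralizer ℚ
          {MonoidAlgebra.of ℚ (Equiv.Perm (Fin (n+1))) (Equiv.swap i.castSucc i.succ)}).comap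
        (Algebra.adjoin ℚ (Set.range (fun k : Fin n => JM n k.succ))).val with hC
    have hCiff : ∀ w : Algebra.adjoin ℚ (Set.range (fun k : Fin n => JM n k.succ)),
        w ∈ C ↔ Commute (MonoidAlgebra.of ℚ (Equiv.Perm (Fin (n+1)))
          (Equiv.swap i.castSucc i.succ)) (w : MonoidAlgebra ℚ (Equiv.Perm (Fin (n+1)))) := by
      intro w
      rw [hC, Subalgebra.mem_comap, Subalgebra.mem_centralizer_iff]
      constructor
      · intro h; exact h _ rfl
      · rintro h _ rfl; exact h
    have hCgen : ∀ k : Fin n, k.succ ≠ i.castSucc → k ≠ i → g k ∈ C := by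
      intro k h1 h2
      rw [hCiff]
      exact JM_comm_swap i.castSucc i.succ k.succ hb h1
        (fun h => h2 (Fin.succ_injective _ h))
    suffices hin : MvPolynomial.aeval g P ∈ C by exact (hCiff _).mp hin
    by_cases hi0 : i = 0
    · -- degenerate case: the transposition is `JM` itself
      have hall : ∀ k : Fin n, g k ∈ C := by
        intro k
        by_cases hk : k = i
        · subst hk hi0
          rw [hCiff]
          have : JM n (0 : Fin n).succ = MonoidAlgebra.of ℚ (Equiv.Perm (Fin (n+1)))
              (Equiv.swap (0 : Fin n).castSucc (0 : Fin n).succ) := by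
            unfold JM
            rw [show Finset.univ.filter (fun j : Fin (n+1) => j < (0 : Fin n).succ)
                = {(0 : Fin n).castSucc} from by
              ext j
              simp only [Finset.mem_filter, Finset.mem_univ, true_and,
                Finset.mem_singleton, Fin.lt_def, Fin.ext_iff]
              simp only [Fin.val_succ, Fin.coe_castSucc, Fin.val_zero]
              omega]
            rw [Finset.sum_singleton]
          show Commute _ ((g 0 : MonoidAlgebra ℚ (Equiv.Perm (Fin (n+1)))))
          show Commute _ (JM n (0 : Fin n).succ)
          rw [this]
        · refine hCgen k ?_ hk
          rw [hi0, Fin.castSucc_zero']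
          exact Fin.succ_ne_zero k
      refine MvPolynomial.induction_on (motive := fun q => MvPolynomial.aeval g q ∈ C) P
        (fun c => ?_) (fun p q hp hq => ?_) (fun p k hp => ?_)
      · show MvPolynomial.aeval g (MvPolynomial.C c) ∈ C
        rw [MvPolynomial.aeval_C]; exact C.algebraMap_mem c
      · show MvPolynomial.aeval g (p + q) ∈ C
        rw [map_add]; exact C.add_mem hp hq
      · show MvPolynomial.aeval g (p * MvPolynomial.X k) ∈ C
        rw [map_mul, MvPolynomial.aeval_X]; exact C.mul_mem hp (hall k)
    · -- main case
      have hvne : (i : ℕ) ≠ 0 := fun h => hi0 (Fin.ext (by simpa using h))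
      set i' : Fin n := ⟨(i : ℕ) - 1, by have := i.isLt; omega⟩ with hi'
      have hi's : i'.succ = i.castSucc := by
        apply Fin.ext
        simp only [Fin.val_succ, Fin.coe_castSucc, hi']
        omega
      have hii' : i' ≠ i := by
        refine fun h => hvne ?_
        have := congrArg Fin.val h
        simp only [hi'] at this
        omega
      have hxsum : g i' + g i ∈ C := by
        rw [hCiff]
        show Commute _ ((g i' : MonoidAlgebra ℚ (Equiv.Perm (Fin (n+1)))) + (g i : _))
        show Commute _ (JM n i'.succ + JM n i.succ)
        rw [hi's]
        exact swap_comm_JM_sum i.castSucc i.succ hb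
      have hxprod : g i' * g i ∈ C := by
        rw [hCiff]
        show Commute _ ((g i' : MonoidAlgebra ℚ (Equiv.Perm (Fin (n+1)))) * (g i : _))
        show Commute _ (JM n i'.succ * JM n i.succ)
        rw [hi's]
        exact swap_comm_JM_prod i.castSucc i.succ hb (hcomm _ _)
      -- the polarization argument
      have hsplit : ∀ h : Fin n → Algebra.adjoin ℚ (Set.range (fun k : Fin n => JM n k.succ)),
          (∏ k, h k) = h i' * (h i * ∏ k ∈ (Finset.univ.erase i').erase i, h k) := by
        intro h
        rw [← Finset.mul_prod_erase Finset.univ h (Finset.mem_univ i'),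
          ← Finset.mul_prod_erase (Finset.univ.erase i') h
            (Finset.mem_erase.mpr ⟨Ne.symm hii', Finset.mem_univ i⟩)]
      have hmono : ∀ (m : Fin n →₀ ℕ) (c : ℚ),
          MvPolynomial.aeval g (MvPolynomial.monomial m c)
            + MvPolynomial.aeval (g ∘ (Equiv.swap i' i)) (MvPolynomial.monomial m c) ∈ C := by
        intro m c
        rw [MvPolynomial.aeval_monomial, MvPolynomial.aeval_monomial,
          Finsupp.prod_pow m g, Finsupp.prod_pow m (g ∘ (Equiv.swap i' i)),
          hsplit (fun k => g k ^ m k), hsplit (fun k => (g ∘ (Equiv.swap i' i)) k ^ m k)]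
        have hWcongr : (∏ k ∈ (Finset.univ.erase i').erase i,
              (g ∘ (Equiv.swap i' i)) k ^ m k)
            = ∏ k ∈ (Finset.univ.erase i').erase i, g k ^ m k := by
          refine Finset.prod_congr rfl fun k hk => ?_
          simp only [Finset.mem_erase] at hk
          simp only [Function.comp_apply,
            Equiv.swap_apply_of_ne_of_ne hk.2.1 hk.1]
        rw [hWcongr]
        simp only [Function.comp_apply, Equiv.swap_apply_left, Equiv.swap_apply_right]
        have hW : (∏ k ∈ (Finset.univ.erase i').erase i, g k ^ m k) ∈ C := by
          refine Subalgebra.prod_mem C fun k hk => Subalgebra.pow_mem C ?_ _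
          simp only [Finset.mem_erase] at hk
          exact hCgen k (fun h => hk.2.1 (Fin.succ_injective _ (h.trans hi's.symm)))
            hk.1
        rw [ring_aux (g i') (g i) (∏ k ∈ (Finset.univ.erase i').erase i, g k ^ m k)
          (m i') (m i) c]
        exact C.mul_mem (C.algebraMap_mem c)
          (C.mul_mem hW (sum_pow_mem C hxsum hxprod (m i') (m i)))
      have hΦ : MvPolynomial.aeval g P + MvPolynomial.aeval (g ∘ (Equiv.swap i' i)) P ∈ C := by
        have hPsum : (MvPolynomial.aeval g) P
            + (MvPolynomial.aeval (g ∘ (Equiv.swap i' i))) P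
            = ∑ v ∈ P.support,
              ((MvPolynomial.aeval g) (MvPolynomial.monomial v (P.coeff v))
                + (MvPolynomial.aeval (g ∘ (Equiv.swap i' i)))
                    (MvPolynomial.monomial v (P.coeff v))) := by
          rw [Finset.sum_add_distrib, ← map_sum, ← map_sum, ← MvPolynomial.as_sum]
        rw [hPsum]
        exact Subalgebra.sum_mem C fun v _ => hmono v _
      have hsym : MvPolynomial.aeval (g ∘ (Equiv.swap i' i)) P = MvPolynomial.aeval g P := by
        rw [← MvPolynomial.aeval_rename, hP (Equiv.swap i' i)]
      rw [hsym, ← two_smul ℚ] at hΦ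
      have h2 := C.smul_mem hΦ ((1:ℚ)/2)
      rwa [smul_smul, show (1:ℚ)/2*2 = 1 by norm_num, one_smul] at h2
  -- Step 3: conclude centrality
  have hσ : ∀ σ : Equiv.Perm (Fin (n+1)),
      Commute (MonoidAlgebra.of ℚ (Equiv.Perm (Fin (n+1))) σ)
        ((MvPolynomial.aeval g P :
          Algebra.adjoin ℚ (Set.range (fun k : Fin n => JM n k.succ)))
            : MonoidAlgebra ℚ (Equiv.Perm (Fin (n+1)))) := by
    intro σ
    have hmem : σ ∈ Submonoid.closure
        (Set.range fun i : Fin n => Equiv.swap (Fin.castSucc i) (Fin.succ i)) := by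
      rw [Equiv.Perm.mclosure_swap_castSucc_succ]; exact Submonoid.mem_top σ
    refine Submonoid.closure_induction ?_ ?_ ?_ hmem
    · rintro _ ⟨i, rfl⟩; exact hgen i
    · rw [map_one]; exact Commute.one_left _
    · intro a b _ _ ha hb; rw [map_mul]; exact ha.mul_left hb
  rw [hz, Subalgebra.mem_center_iff]
  intro b
  refine MonoidAlgebra.induction_on
    (motive := fun w => w * ((MvPolynomial.aeval g P :
      Algebra.adjoin ℚ (Set.range (fun k : Fin n => JM n k.succ)))
        : MonoidAlgebra ℚ (Equiv.Perm (Fin (n+1))))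
      = ((MvPolynomial.aeval g P :
      Algebra.adjoin ℚ (Set.range (fun k : Fin n => JM n k.succ)))
        : MonoidAlgebra ℚ (Equiv.Perm (Fin (n+1)))) * w)
    b (fun σ => (hσ σ).eq) (fun f f' hf hf' => ?_) (fun r f hf => ?_)
  · show _ * _ = _ * _
    rw [add_mul, mul_add]
    exact congrArg₂ (· + ·) hf hf'
  · show _ * _ = _ * _
    rw [smul_mul_assoc, mul_smul_comm]
    exact congrArg (r • ·) hf
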